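/- arXiv:1507.08181 — 3 statements merged into one kernel-verified Lean document; each statement's English description precedes it below -/
import Mathlib

section
/- Let f ∈ ℂ[x,y], and let g ∈ ℂ[x] and k ∈ ℂ[y] be squarefree polynomials. Then Z(g) × Z(k) ⊆ Z(f) if and only if there exist h, l ∈ ℂ[x,y] such that f = g(x)·h(x,y) + k(y)·l(x,y). -/
open MvPolynomial

/-- A squarefree polynomial over `ℂ` divides any polynomial vanishing at all of its roots. -/
lemma aux_dvd_of_eval_eq_zero (g q : Polynomial ℂ) (hg : Squarefree g)
    (h : ∀ a : ℂ, g.eval a = 0 → q.eval a = 0) : g ∣ q := by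
  classical
  rcases eq_or_ne q 0 with rfl | hq
  · exact dvd_zero g
  have hg0 : g ≠ 0 := hg.ne_zero
  have hnodup : g.roots.Nodup :=
    Polynomial.nodup_roots (PerfectField.separable_iff_squarefree.mpr hg)
  have hcard : g.roots.card = g.natDegree :=
    Polynomial.splits_iff_card_roots.mp (IsAlgClosed.splits g)
  have hfac := Polynomial.C_leadingCoeff_mul_prod_multiset_X_sub_C hcard
  have hle : g.roots ≤ q.roots := by
    rw [Multiset.le_iff_count]
    intro a
    by_cases ha : a ∈ g.roots
    · have h1 : g.roots.count a = 1 := Multiset.count_eq_one_of_mem hnodup ha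
      have ha' : a ∈ q.roots := by
        rw [Polynomial.mem_roots hq]
        exact h a (Polynomial.isRoot_of_mem_roots ha)
      rw [h1]
      exact Multiset.one_le_count_iff_mem.mpr ha'
    · simp [Multiset.count_eq_zero_of_notMem ha]
  have hdvd : (g.roots.map fun a => Polynomial.X - Polynomial.C a).prod ∣ q :=
    (Multiset.prod_X_sub_C_dvd_iff_le_roots hq _).mpr hle
  have hu : IsUnit (Polynomial.C g.leadingCoeff) :=
    Polynomial.isUnit_C.mpr (Polynomial.leadingCoeff_ne_zero.mpr hg0).isUnit
  rw [← hfac]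
  exact hu.mul_left_dvd.mpr hdvd

/-- Commuting evaluations in a bivariate polynomial. -/
lemma aux_eval_eval (a b : ℂ) (r : Polynomial (Polynomial ℂ)) :
    Polynomial.eval a (Polynomial.eval (Polynomial.C b) r)
      = Polynomial.eval b (r.map (Polynomial.evalRingHom a)) := by
  induction r using Polynomial.induction_on' with
  | add p q hp hq => simp [hp, hq]
  | monomial n f => simp [Polynomial.eval_monomial]

/-- The key lemma, in `ℂ[x][y]`. -/
lemma aux_key (g k : Polynomial ℂ) (hg : Squarefree g) (hk : Squarefree k)
    (p : Polynomial (Polynomial ℂ))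
    (hv : ∀ a b : ℂ, g.eval a = 0 → k.eval b = 0 →
      Polynomial.eval a (Polynomial.eval (Polynomial.C b) p) = 0) :
    ∃ h l : Polynomial (Polynomial ℂ),
      p = Polynomial.C g * h + (k.map Polynomial.C) * l := by
  classical
  by_cases hgd : g.natDegree = 0
  · obtain ⟨c, rfl⟩ := Polynomial.natDegree_eq_zero.mp hgd
    have hc : c ≠ 0 := fun h => hg.ne_zero (by rw [h, map_zero])
    refine ⟨Polynomial.C (Polynomial.C c⁻¹) * p, 0, ?_⟩
    rw [mul_zero, add_zero, ← mul_assoc, ← Polynomial.C_mul, ← Polynomial.C_mul,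
      mul_inv_cancel₀ hc, Polynomial.C_1, Polynomial.C_1, one_mul]
  by_cases hkd : k.natDegree = 0
  · obtain ⟨c, rfl⟩ := Polynomial.natDegree_eq_zero.mp hkd
    have hc : c ≠ 0 := fun h => hk.ne_zero (by rw [h, map_zero])
    refine ⟨0, Polynomial.C (Polynomial.C c⁻¹) * p, ?_⟩
    rw [mul_zero, zero_add, Polynomial.map_C, ← mul_assoc, ← Polynomial.C_mul,
      ← Polynomial.C_mul, mul_inv_cancel₀ hc, Polynomial.C_1, Polynomial.C_1, one_mul]
  -- main case
  have hk0 : k ≠ 0 := hk.ne_zero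
  have hkc : k.leadingCoeff ≠ 0 := Polynomial.leadingCoeff_ne_zero.mpr hk0
  set c := k.leadingCoeff with hc
  have hmon : (k * Polynomial.C c⁻¹).Monic := Polynomial.monic_mul_leadingCoeff_inv hk0
  set K : Polynomial (Polynomial ℂ) := (k * Polynomial.C c⁻¹).map Polynomial.C with hK
  have hKmon : K.Monic := hmon.map _
  set r := p %ₘ K with hr
  set q := p /ₘ K with hq
  have hpr : r + K * q = p := Polynomial.modByMonic_add_div p K
  have hKdeg : K.natDegree = k.natDegree := by
    rw [hK, Polynomial.natDegree_map_eq_of_injective Polynomial.C_injective,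
      Polynomial.natDegree_mul_C (inv_ne_zero hkc)]
  -- evaluation of K at roots of k is zero
  have hKev : ∀ a b : ℂ, k.eval b = 0 →
      Polynomial.eval a (Polynomial.eval (Polynomial.C b) K) = 0 := by
    intro a b hb
    rw [hK, Polynomial.eval_map, Polynomial.eval₂_at_apply]
    simp [hb]
  -- r vanishes on common roots
  have hrv : ∀ a b : ℂ, g.eval a = 0 → k.eval b = 0 →
      Polynomial.eval a (Polynomial.eval (Polynomial.C b) r) = 0 := by
    intro a b ha hb
    have h3 : Polynomial.eval a (Polynomial.eval (Polynomial.C b) p)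
        = Polynomial.eval a (Polynomial.eval (Polynomial.C b) r)
          + Polynomial.eval a (Polynomial.eval (Polynomial.C b) K)
            * Polynomial.eval a (Polynomial.eval (Polynomial.C b) q) := by
      rw [← hpr]; simp
    rw [hv a b ha hb, hKev a b hb, zero_mul, add_zero] at h3
    exact h3.symm
  -- C g divides r
  have hgr : Polynomial.C g ∣ r := by
    rw [Polynomial.C_dvd_iff_dvd_coeff]
    intro i
    apply aux_dvd_of_eval_eq_zero g _ hg
    intro a ha
    rcases eq_or_ne r 0 with hr0 | hr0
    · simp [hr0]
    have hnodup : k.roots.Nodup :=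
      Polynomial.nodup_roots (PerfectField.separable_iff_squarefree.mpr hk)
    have hcardk : k.roots.card = k.natDegree :=
      Polynomial.splits_iff_card_roots.mp (IsAlgClosed.splits k)
    have hmap : r.map (Polynomial.evalRingHom a) = 0 := by
      apply Polynomial.eq_zero_of_natDegree_lt_card_of_eval_eq_zero' _ k.roots.toFinset
      · intro b hb
        have hb' : k.eval b = 0 :=
          Polynomial.isRoot_of_mem_roots (Multiset.mem_toFinset.mp hb)
        rw [← aux_eval_eval a b r]
        exact hrv a b ha hb'
      · have h1 : (r.map (Polynomial.evalRingHom a)).natDegree ≤ r.natDegree :=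
          Polynomial.natDegree_map_le
        have h2 : r.natDegree < K.natDegree :=
          Polynomial.natDegree_lt_natDegree hr0 (Polynomial.degree_modByMonic_lt p hKmon)
        rw [Multiset.toFinset_card_of_nodup hnodup, hcardk]
        omega
    have := congrArg (fun s => Polynomial.coeff s i) hmap
    simpa [Polynomial.coeff_map] using this
  obtain ⟨h, hh⟩ := hgr
  refine ⟨h, Polynomial.C (Polynomial.C c⁻¹) * q, ?_⟩
  have hKfac : K = (k.map Polynomial.C) * Polynomial.C (Polynomial.C c⁻¹) := by
    rw [hK, Polynomial.map_mul, Polynomial.map_C]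
  calc p = r + K * q := hpr.symm
    _ = Polynomial.C g * h + (k.map Polynomial.C) * (Polynomial.C (Polynomial.C c⁻¹) * q) := by
        rw [hh, hKfac]; ring

/-- The forward ring hom `ℂ[X₀,X₁] → ℂ[x][y]`, sending `X₀ ↦ C x`, `X₁ ↦ y`. -/
noncomputable def toBiv : MvPolynomial (Fin 2) ℂ →+* Polynomial (Polynomial ℂ) :=
  MvPolynomial.eval₂Hom ((Polynomial.C).comp (Polynomial.C))
    ![Polynomial.C Polynomial.X, Polynomial.X]

/-- The backward ring hom `ℂ[x][y] → ℂ[X₀,X₁]`. -/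
noncomputable def ofBiv : Polynomial (Polynomial ℂ) →+* MvPolynomial (Fin 2) ℂ :=
  Polynomial.eval₂RingHom
    (Polynomial.eval₂RingHom (MvPolynomial.C) (MvPolynomial.X 0)) (MvPolynomial.X 1)

lemma ofBiv_toBiv (f : MvPolynomial (Fin 2) ℂ) : ofBiv (toBiv f) = f := by
  have h : ofBiv.comp toBiv = RingHom.id (MvPolynomial (Fin 2) ℂ) := by
    apply MvPolynomial.ringHom_ext
    · intro c; simp [toBiv, ofBiv]
    · intro i; fin_cases i <;> simp [toBiv, ofBiv]
  exact DFunLike.congr_fun h f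

lemma eval_toBiv (a b : ℂ) (f : MvPolynomial (Fin 2) ℂ) :
    Polynomial.eval a (Polynomial.eval (Polynomial.C b) (toBiv f))
      = MvPolynomial.eval ![a, b] f := by
  have h : ((Polynomial.evalRingHom a).comp
      ((Polynomial.evalRingHom (Polynomial.C b)).comp toBiv))
      = (MvPolynomial.eval ![a, b] : MvPolynomial (Fin 2) ℂ →+* ℂ) := by
    apply MvPolynomial.ringHom_ext
    · intro c; simp [toBiv]
    · intro i; fin_cases i <;> simp [toBiv]
  exact DFunLike.congr_fun h f

lemma ofBiv_C (g : Polynomial ℂ) :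
    ofBiv (Polynomial.C g) = Polynomial.aeval (MvPolynomial.X 0 : MvPolynomial (Fin 2) ℂ) g := by
  rw [Polynomial.aeval_def, MvPolynomial.algebraMap_eq]
  simp [ofBiv]

lemma ofBiv_mapC (k : Polynomial ℂ) :
    ofBiv (k.map Polynomial.C)
      = Polynomial.aeval (MvPolynomial.X 1 : MvPolynomial (Fin 2) ℂ) k := by
  have hcomp : (Polynomial.eval₂RingHom (MvPolynomial.C : ℂ →+* MvPolynomial (Fin 2) ℂ)
      (MvPolynomial.X 0)).comp (Polynomial.C) = (MvPolynomial.C : ℂ →+* MvPolynomial (Fin 2) ℂ) := by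
    ext c; simp
  rw [Polynomial.aeval_def, MvPolynomial.algebraMap_eq]
  show Polynomial.eval₂ _ _ _ = _
  rw [Polynomial.eval₂_map, hcomp]

lemma eval_aeval_X0 (a b : ℂ) (g : Polynomial ℂ) :
    MvPolynomial.eval ![a, b] (Polynomial.aeval (MvPolynomial.X 0 : MvPolynomial (Fin 2) ℂ) g)
      = g.eval a := by
  rw [Polynomial.aeval_def, MvPolynomial.algebraMap_eq]
  rw [Polynomial.hom_eval₂]
  simp only [MvPolynomial.eval_X, Matrix.cons_val_zero]
  have : (MvPolynomial.eval ![a, b] : MvPolynomial (Fin 2) ℂ →+* ℂ).comp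
      (MvPolynomial.C : ℂ →+* MvPolynomial (Fin 2) ℂ) = RingHom.id ℂ := by
    ext c; simp
  rw [this]
  rfl

lemma eval_aeval_X1 (a b : ℂ) (k : Polynomial ℂ) :
    MvPolynomial.eval ![a, b] (Polynomial.aeval (MvPolynomial.X 1 : MvPolynomial (Fin 2) ℂ) k)
      = k.eval b := by
  rw [Polynomial.aeval_def, MvPolynomial.algebraMap_eq]
  rw [Polynomial.hom_eval₂]
  simp only [MvPolynomial.eval_X, Matrix.cons_val_one, Matrix.head_cons]
  have : (MvPolynomial.eval ![a, b] : MvPolynomial (Fin 2) ℂ →+* ℂ).comp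
      (MvPolynomial.C : ℂ →+* MvPolynomial (Fin 2) ℂ) = RingHom.id ℂ := by
    ext c; simp
  rw [this]
  rfl

/-- Special case of Alon's combinatorial Nullstellensatz: for `f ∈ ℂ[x,y]` and squarefree
`g ∈ ℂ[x]`, `k ∈ ℂ[y]`, we have `Z(g) × Z(k) ⊆ Z(f)` if and only if
`f = g(x)·h(x,y) + k(y)·l(x,y)` for some `h, l ∈ ℂ[x,y]`. -/
theorem alon_nullstellensatz_two_vars
    (f : MvPolynomial (Fin 2) ℂ) (g k : Polynomial ℂ)
    (hg : Squarefree g) (hk : Squarefree k) :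
    (∀ a b : ℂ, g.eval a = 0 → k.eval b = 0 → eval ![a, b] f = 0) ↔
      ∃ h l : MvPolynomial (Fin 2) ℂ,
        f = Polynomial.aeval (X 0 : MvPolynomial (Fin 2) ℂ) g * h
            + Polynomial.aeval (X 1 : MvPolynomial (Fin 2) ℂ) k * l := by
  constructor
  · intro hv
    obtain ⟨h, l, hpl⟩ := aux_key g k hg hk (toBiv f) (by
      intro a b ha hb
      rw [eval_toBiv]
      exact hv a b ha hb)
    refine ⟨ofBiv h, ofBiv l, ?_⟩
    have h2 := congrArg ofBiv hpl
    rw [ofBiv_toBiv] at h2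
    rw [h2, map_add, map_mul, map_mul, ofBiv_C, ofBiv_mapC]
  · rintro ⟨h, l, rfl⟩ a b ha hb
    rw [map_add, map_mul, map_mul, eval_aeval_X0, eval_aeval_X1, ha, hb,
      zero_mul, zero_mul, add_zero]
end

section
/- Let F ∈ ℂ[x,y,s,t], and let G ∈ ℂ[x,y] and K ∈ ℂ[s,t] be non-constant squarefree polynomials. Then Z(G) × Z(K) ⊆ Z(F) if and only if F is (G,K)-Cartesian, i.e., there exist H, L ∈ ℂ[x,y,s,t] such that F(x,y,s,t) = G(x,y)·H(x,y,s,t) + K(s,t)·L(x,y,s,t). -/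
open MvPolynomial

/-- Regard `G ∈ ℂ[x,y]` as a polynomial in `x,y,s,t`. -/
noncomputable def liftXY (p : MvPolynomial (Fin 2) ℂ) : MvPolynomial (Fin 4) ℂ :=
  rename (fun i : Fin 2 => (⟨i.val, by omega⟩ : Fin 4)) p

/-- Regard `K ∈ ℂ[s,t]` as a polynomial in `x,y,s,t`. -/
noncomputable def liftST (p : MvPolynomial (Fin 2) ℂ) : MvPolynomial (Fin 4) ℂ :=
  rename (fun i : Fin 2 => (⟨i.val + 2, by omega⟩ : Fin 4)) p

set_option maxHeartbeats 1000000
set_option synthInstance.maxHeartbeats 200000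

lemma dvd_of_vanish (G c : MvPolynomial (Fin 2) ℂ) (hsf : Squarefree G)
    (h : ∀ p : Fin 2 → ℂ, eval p G = 0 → eval p c = 0) : G ∣ c := by
  have hc : c ∈ vanishingIdeal ℂ (zeroLocus ℂ (Ideal.span {G})) := by
    rw [mem_vanishingIdeal_iff]
    intro x hx
    exact h x (hx G (Ideal.subset_span rfl))
  rw [vanishingIdeal_zeroLocus_eq_radical] at hc
  obtain ⟨n, hn⟩ := hc
  rw [Ideal.mem_span_singleton] at hn
  exact hsf.isRadical n c hn

noncomputable def e4 : MvPolynomial (Fin 4) ℂ ≃ₐ[ℂ]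
    MvPolynomial (Fin 2) (MvPolynomial (Fin 2) ℂ) :=
  (renameEquiv ℂ (finSumFinEquiv (m := 2) (n := 2)).symm).trans
    (sumAlgEquiv ℂ (Fin 2) (Fin 2))

lemma e4_liftXY (G : MvPolynomial (Fin 2) ℂ) : e4 (liftXY G) = map C G := by
  have h1 : (fun i : Fin 2 => (⟨i.val, by omega⟩ : Fin 4)) =
      (finSumFinEquiv (m := 2) (n := 2)) ∘ Sum.inl := by
    funext i; simp [finSumFinEquiv]; rfl
  rw [liftXY, h1, ← rename_rename]
  show (sumAlgEquiv ℂ (Fin 2) (Fin 2)) (renameEquiv ℂ finSumFinEquiv.symm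
    (rename finSumFinEquiv (rename Sum.inl G))) = _
  rw [renameEquiv_apply, rename_rename]
  simp only [Equiv.symm_comp_self, rename_id]
  have := AlgHom.congr_fun (sumAlgEquiv_comp_rename_inl ℂ (Fin 2) (Fin 2)) G
  simp only [AlgHom.comp_apply, AlgEquiv.toAlgHom_eq_coe, AlgHom.coe_coe] at this
  rw [AlgHom.id_apply]; exact this

lemma e4_liftST (K : MvPolynomial (Fin 2) ℂ) : e4 (liftST K) = C K := by
  have h1 : (fun i : Fin 2 => (⟨i.val + 2, by omega⟩ : Fin 4)) =
      (finSumFinEquiv (m := 2) (n := 2)) ∘ Sum.inr := by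
    funext i; simp [finSumFinEquiv]; rfl
  rw [liftST, h1, ← rename_rename]
  show (sumAlgEquiv ℂ (Fin 2) (Fin 2)) (renameEquiv ℂ finSumFinEquiv.symm
    (rename finSumFinEquiv (rename Sum.inr K))) = _
  rw [renameEquiv_apply, rename_rename]
  simp only [Equiv.symm_comp_self, rename_id]
  have := AlgHom.congr_fun (sumAlgEquiv_comp_rename_inr ℂ (Fin 2) (Fin 2)) K
  simp only [AlgHom.comp_apply, AlgEquiv.toAlgHom_eq_coe, AlgHom.coe_coe] at this
  rw [AlgHom.id_apply]; exact this

lemma eval_e4 (v w : Fin 2 → ℂ) (F : MvPolynomial (Fin 4) ℂ) :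
    eval w (eval (fun i => C (v i)) (e4 F)) = eval (Fin.append v w) F := by
  have h : ((eval w).comp ((eval (fun i => C (v i))).comp
      e4.toAlgHom.toRingHom)) = eval (Fin.append v w) := by
    apply MvPolynomial.ringHom_ext
    · intro a; simp [e4]
    · intro i
      have e0 : (finSumFinEquiv (m := 2) (n := 2)).symm (0 : Fin 4) = Sum.inl 0 := by decide
      have e1 : (finSumFinEquiv (m := 2) (n := 2)).symm (1 : Fin 4) = Sum.inl 1 := by decide
      have e2 : (finSumFinEquiv (m := 2) (n := 2)).symm (2 : Fin 4) = Sum.inr 0 := by decide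
      have e3 : (finSumFinEquiv (m := 2) (n := 2)).symm (3 : Fin 4) = Sum.inr 1 := by decide
      have a0 : Fin.append v w (0 : Fin 4) = v 0 := rfl
      have a1 : Fin.append v w (1 : Fin 4) = v 1 := rfl
      have a2 : Fin.append v w (2 : Fin 4) = w 0 := rfl
      have a3 : Fin.append v w (3 : Fin 4) = w 1 := rfl
      fin_cases i <;> simp [e4, e0, e1, e2, e3, a0, a1, a2, a3]
  exact RingHom.congr_fun h F

/-- First Nullstellensatz for two-dimensional products: for `F ∈ ℂ[x,y,s,t]` and
non-constant squarefree `G ∈ ℂ[x,y]`, `K ∈ ℂ[s,t]`, we have `Z(G) × Z(K) ⊆ Z(F)`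
if and only if `F` is `(G,K)`-Cartesian, i.e.
`F = G(x,y)·H(x,y,s,t) + K(s,t)·L(x,y,s,t)` for some `H, L`. -/
theorem nullstellensatz_two_dim_products
    (F : MvPolynomial (Fin 4) ℂ) (G K : MvPolynomial (Fin 2) ℂ)
    (hG : G.totalDegree ≠ 0) (hK : K.totalDegree ≠ 0)
    (hGsf : Squarefree G) (hKsf : Squarefree K) :
    (∀ p q : ℂ × ℂ, eval ![p.1, p.2] G = 0 → eval ![q.1, q.2] K = 0 →
        eval ![p.1, p.2, q.1, q.2] F = 0) ↔
      ∃ H L : MvPolynomial (Fin 4) ℂ, F = liftXY G * H + liftST K * L := by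
  classical
  constructor
  · intro h
    let I : Ideal (MvPolynomial (Fin 2) ℂ) := Ideal.span {K}
    let B := MvPolynomial (Fin 2) ℂ ⧸ I
    let π : MvPolynomial (Fin 2) ℂ →+* B := Ideal.Quotient.mk I
    let P : MvPolynomial (Fin 2) B := map π (e4 F)
    have hπC : ∀ a : ℂ, π (C a) = algebraMap ℂ B a := fun a => rfl
    -- Step 1
    have step1 : ∀ v : Fin 2 → ℂ, eval v G = 0 →
        eval (fun i => π (C (v i))) P = 0 := by
      intro v hv
      have hdvd : K ∣ eval (fun i => C (v i)) (e4 F) := by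
        apply dvd_of_vanish _ _ hKsf
        intro w hw
        rw [eval_e4]
        have happ : Fin.append v w = ![v 0, v 1, w 0, w 1] := by
          funext j; fin_cases j <;> rfl
        have hv' : ![v 0, v 1] = v := by funext j; fin_cases j <;> rfl
        have hw' : ![w 0, w 1] = w := by funext j; fin_cases j <;> rfl
        rw [happ]
        exact h (v 0, v 1) (w 0, w 1) (by rwa [hv']) (by rwa [hw'])
      have : π (eval (fun i => C (v i)) (e4 F)) = 0 := by
        rw [Ideal.Quotient.eq_zero_iff_mem]
        exact Ideal.mem_span_singleton.mpr hdvd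
      calc eval (fun i => π (C (v i))) P
          = eval₂ π (fun i => π (C (v i))) (e4 F) := eval_map _ _ _
        _ = π (eval (fun i => C (v i)) (e4 F)) := by
            simp only [eval, coe_eval₂Hom]
            rw [eval₂_comp_left π]
            simp [Function.comp_def]
        _ = 0 := this
    -- Step 2: basis decomposition
    let b := Module.Basis.ofVectorSpace ℂ B
    let c : _ → MvPolynomial (Fin 2) ℂ := fun i => P.support.sum fun n => monomial n (b.repr (P.coeff n) i)
    have coeff_c : ∀ i n, coeff n (c i) = b.repr (P.coeff n) i := by
      intro i n
      rw [show c i = P.support.sum fun n => monomial n (b.repr (P.coeff n) i) from rfl,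
        coeff_sum]
      simp only [coeff_monomial]
      rw [Finset.sum_ite_eq' P.support n (fun m => b.repr (P.coeff m) i)]
      split
      · rfl
      · next hn =>
        rw [notMem_support_iff] at hn
        rw [hn, LinearEquiv.map_zero]; rfl
    let T : Finset _ := P.support.biUnion fun n => (b.repr (P.coeff n)).support
    have hPsum : P = ∑ i ∈ T, C (b i) * map (algebraMap ℂ B) (c i) := by
      apply MvPolynomial.ext
      intro n
      rw [coeff_sum]
      simp only [coeff_C_mul, coeff_map, coeff_c]
      have hsub : (b.repr (P.coeff n)).support ⊆ T := by
        by_cases hn : n ∈ P.support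
        · exact Finset.subset_biUnion_of_mem (fun n => (b.repr (coeff n P)).support) hn
        · rw [notMem_support_iff] at hn
          rw [hn, LinearEquiv.map_zero]
          simp
      calc coeff n P = Finsupp.linearCombination ℂ b (b.repr (coeff n P)) :=
            (b.linearCombination_repr _).symm
        _ = ∑ i ∈ T, (b.repr (coeff n P)) i • b i := by
            rw [Finsupp.linearCombination_apply,
              Finsupp.sum_of_support_subset _ hsub _ (by intros; simp)]
        _ = ∑ i ∈ T, b i * algebraMap ℂ B ((b.repr (coeff n P)) i) := by
            refine Finset.sum_congr rfl fun i _ => ?_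
            exact (Algebra.smul_def ((b.repr (coeff n P)) i) (b i)).trans (mul_comm _ _)
    have hczero : ∀ i ∈ T, ∀ v : Fin 2 → ℂ, eval v G = 0 → eval v (c i) = 0 := by
      intro i hi v hv
      have h0 := step1 v hv
      rw [hPsum, map_sum] at h0
      have hterm : ∀ j, eval (fun i => π (C (v i))) (C (b j) * map (algebraMap ℂ B) (c j))
          = (eval v (c j)) • b j := by
        intro j
        rw [map_mul, eval_C]
        have h2 : eval (fun i => π (C (v i))) (map (algebraMap ℂ B) (c j))
            = algebraMap ℂ B (eval v (c j)) := by
          rw [eval_map]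
          have h3 := eval₂_comp_left (algebraMap ℂ B) (RingHom.id ℂ) v (c j)
          rw [RingHom.comp_id] at h3
          simp only [eval, coe_eval₂Hom]
          exact h3.symm
        rw [h2]
        exact (mul_comm (b j) (algebraMap ℂ B (eval v (c j)))).trans (Algebra.smul_def (eval v (c j)) (b j)).symm
      rw [Finset.sum_congr rfl (fun j _ => hterm j)] at h0
      exact linearIndependent_iff'.mp b.linearIndependent T (fun j => eval v (c j)) h0 i hi
    have hdvd2 : ∀ i, ∃ u, i ∈ T → c i = G * u := by
      intro i
      by_cases hi : i ∈ T
      · obtain ⟨u, hu⟩ := dvd_of_vanish G (c i) hGsf (hczero i hi)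
        exact ⟨u, fun _ => hu⟩
      · exact ⟨0, fun hin => absurd hin hi⟩
    choose d hd using hdvd2
    have hPfac : P = map (algebraMap ℂ B) G * ∑ i ∈ T, C (b i) * map (algebraMap ℂ B) (d i) := by
      rw [hPsum, Finset.mul_sum]
      refine Finset.sum_congr rfl fun i hi => ?_
      rw [hd i hi, map_mul]
      ring
    obtain ⟨W, hW⟩ := MvPolynomial.map_surjective π Ideal.Quotient.mk_surjective
      (∑ i ∈ T, C (b i) * map (algebraMap ℂ B) (d i))
    have hmapCG : map π (map C G) = map (algebraMap ℂ B) G := by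
      rw [map_map]; rfl
    have hker : e4 F - map C G * W ∈
        Ideal.span {(C K : MvPolynomial (Fin 2) (MvPolynomial (Fin 2) ℂ))} := by
      have hz : map π (e4 F - map C G * W) = 0 := by
        rw [map_sub, map_mul, hW, hmapCG, ← hPfac]
        exact sub_self P
      have h5 : e4 F - map C G * W ∈ RingHom.ker
          (map π : MvPolynomial (Fin 2) (MvPolynomial (Fin 2) ℂ) →+*
            MvPolynomial (Fin 2) B) := hz
      rw [MvPolynomial.ker_map, Ideal.mk_ker] at h5
      have hI : I = Ideal.span {K} := rfl
      rwa [hI, Ideal.map_span, Set.image_singleton] at h5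
    rw [Ideal.mem_span_singleton] at hker
    obtain ⟨L1, hL1⟩ := hker
    refine ⟨e4.symm W, e4.symm L1, e4.injective ?_⟩
    rw [map_add, map_mul, map_mul, e4_liftXY, e4_liftST, AlgEquiv.apply_symm_apply,
      AlgEquiv.apply_symm_apply, ← hL1]
    ring
  · rintro ⟨H, L, rfl⟩ p q hp hq
    have hG4 : eval ![p.1, p.2, q.1, q.2] (liftXY G) = 0 := by
      rw [liftXY, eval_rename]
      have : (![p.1, p.2, q.1, q.2] ∘ fun i : Fin 2 => (⟨i.val, by omega⟩ : Fin 4))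
          = ![p.1, p.2] := by funext i; fin_cases i <;> rfl
      rw [this, hp]
    have hK4 : eval ![p.1, p.2, q.1, q.2] (liftST K) = 0 := by
      rw [liftST, eval_rename]
      have : (![p.1, p.2, q.1, q.2] ∘ fun i : Fin 2 => (⟨i.val + 2, by omega⟩ : Fin 4))
          = ![q.1, q.2] := by funext i; fin_cases i <;> rfl
      rw [this, hq]
    simp [hG4, hK4]
end

section
/- Let F(x,y,s,t) = x·s − y + t ∈ ℂ[x,y,s,t]. Then F is not Cartesian: there do not exist non-constant G ∈ ℂ[x,y], K ∈ ℂ[s,t] and H, L ∈ ℂ[x,y,s,t] with F = G·H + K·L. -/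
open MvPolynomial

/-- `F ∈ ℂ[x,y,s,t]` is Cartesian if `F = G·H + K·L` with `G ∈ ℂ[x,y]`, `K ∈ ℂ[s,t]`
non-constant. -/
def IsCartesian (F : MvPolynomial (Fin 4) ℂ) : Prop :=
  ∃ (G K : MvPolynomial (Fin 2) ℂ) (H L : MvPolynomial (Fin 4) ℂ),
    G.totalDegree ≠ 0 ∧ K.totalDegree ≠ 0 ∧ F = liftXY G * H + liftST K * L

lemma finSuccEquiv_C' {n : ℕ} (c : ℂ) :
    MvPolynomial.finSuccEquiv ℂ n (C c) = Polynomial.C (C c) := by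
  simp [finSuccEquiv_apply]

noncomputable def Psi : MvPolynomial (Fin 2) ℂ ≃+* Polynomial (Polynomial ℂ) :=
  ((renameEquiv ℂ (Equiv.swap (0 : Fin 2) 1)).toRingEquiv.trans
    (MvPolynomial.finSuccEquiv ℂ 1).toRingEquiv).trans
    (Polynomial.mapEquiv ((MvPolynomial.finSuccEquiv ℂ 0).toRingEquiv.trans
      (Polynomial.mapEquiv (isEmptyRingEquiv ℂ (Fin 0)))))

lemma Psi_C (c : ℂ) : Psi (C c) = Polynomial.C (Polynomial.C c) := by
  simp [Psi, Polynomial.mapEquiv, isEmptyRingEquiv, finSuccEquiv_C']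
  exact (MvPolynomial.coeff_zero_C c :)

lemma Psi_X0 : Psi (X 0) = Polynomial.C Polynomial.X := by
  have h1 : (MvPolynomial.finSuccEquiv ℂ 1) (X 1) = Polynomial.C (X 0) := by
    have : (1 : Fin 2) = Fin.succ 0 := rfl
    rw [this, finSuccEquiv_X_succ]
  simp [Psi, Polynomial.mapEquiv, Equiv.swap_apply_left, h1, finSuccEquiv_X_zero]

lemma Psi_X1 : Psi (X 1) = Polynomial.X := by
  simp [Psi, Polynomial.mapEquiv, Equiv.swap_apply_right, finSuccEquiv_X_zero]

lemma Psi_eval (u v : ℂ) (p : MvPolynomial (Fin 2) ℂ) :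
    eval ![u, v] p = ((Psi p).eval (Polynomial.C v)).eval u := by
  induction p using MvPolynomial.induction_on with
  | C c => simp [Psi_C]
  | add p q hp hq => simp [map_add, hp, hq]
  | mul_X p i hp =>
      rw [map_mul, map_mul, Polynomial.eval_mul, Polynomial.eval_mul, hp]
      congr 1
      fin_cases i
      · simp [Psi_X0]
      · simp [Psi_X1]

lemma lemA (K : MvPolynomial (Fin 2) ℂ) (hK : K.totalDegree ≠ 0) :
    ∃ u v : ℂ, eval ![u, v] K = 0 := by
  set q := Psi K with hq
  by_cases h0 : q.natDegree = 0
  · obtain ⟨b, hb⟩ : ∃ b, q = Polynomial.C b := ⟨q.coeff 0, Polynomial.eq_C_of_natDegree_eq_zero h0⟩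
    have hbdeg : b.natDegree ≠ 0 := by
      intro hb0
      obtain ⟨c, hc⟩ : ∃ c, b = Polynomial.C c := ⟨b.coeff 0, Polynomial.eq_C_of_natDegree_eq_zero hb0⟩
      have : K = C c := by
        apply Psi.injective
        rw [Psi_C, ← hq, hb, hc]
      rw [this, totalDegree_C] at hK
      exact hK rfl
    have hdeg : b.degree ≠ 0 := fun h => hbdeg (Polynomial.natDegree_eq_zero_iff_degree_le_zero.mpr h.le)
    obtain ⟨u, hu⟩ := Complex.isAlgClosed.exists_root b hdeg
    exact ⟨u, 0, by rw [Psi_eval, ← hq, hb]; simpa using hu⟩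
  · have hqne : q ≠ 0 := fun h => h0 (by simp [h])
    have hlc : q.leadingCoeff ≠ 0 := Polynomial.leadingCoeff_ne_zero.mpr hqne
    obtain ⟨u, hu⟩ : ∃ u, q.leadingCoeff.eval u ≠ 0 := by
      by_contra h
      push_neg at h
      exact hlc (Polynomial.zero_of_eval_zero _ h)
    set qu := q.map (Polynomial.evalRingHom u) with hqu
    have hcoeff : qu.coeff q.natDegree ≠ 0 := by
      rw [hqu, Polynomial.coeff_map]; exact hu
    have hdeg : qu.degree ≠ 0 := by
      intro h
      have h1 : (q.natDegree : WithBot ℕ) ≤ qu.degree := Polynomial.le_degree_of_ne_zero hcoeff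
      rw [h] at h1
      exact h0 (by exact_mod_cast Nat.le_zero.mp (by exact_mod_cast h1))
    obtain ⟨v, hv⟩ := Complex.isAlgClosed.exists_root qu hdeg
    refine ⟨u, v, ?_⟩
    rw [Psi_eval]
    have : ((Psi K).eval (Polynomial.C v)).eval u = qu.eval v := by
      rw [hqu, Polynomial.eval_map, ← hq]
      show Polynomial.evalRingHom u (Polynomial.eval₂ (RingHom.id _) (Polynomial.C v) q) = _
      rw [Polynomial.hom_eval₂]
      simp
    rw [this]
    exact hv

lemma lemB (K L : MvPolynomial (Fin 2) ℂ) (α γ : ℂ) (hK : K.totalDegree ≠ 0)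
    (h : K * L = C α * X 0 + X 1 + C γ) :
    ∃ c : ℂ, c ≠ 0 ∧ K = C c * (C α * X 0 + X 1 + C γ) := by
  set r : Polynomial ℂ := Polynomial.C α * Polynomial.X + Polynomial.C γ with hr
  have hP : Psi (C α * X 0 + X 1 + C γ) = Polynomial.X + Polynomial.C r := by
    rw [map_add, map_add, map_mul, Psi_C, Psi_X0, Psi_X1, Psi_C, hr]
    rw [← Polynomial.C_mul, map_add, Polynomial.C_mul]
    ring
  have hmul : Psi K * Psi L = Polynomial.X + Polynomial.C r := by
    rw [← map_mul, h, hP]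
  have hK0 : K ≠ 0 := fun h0 => hK (by simp [h0])
  have hPK0 : Psi K ≠ 0 := fun h0 => hK0 (Psi.injective (by simpa using h0))
  have hprod0 : Psi K * Psi L ≠ 0 := by rw [hmul]; exact Polynomial.X_add_C_ne_zero r
  have hPL0 : Psi L ≠ 0 := fun h0 => hprod0 (by rw [h0, mul_zero])
  have hnd : (Psi K).natDegree + (Psi L).natDegree = 1 := by
    rw [← Polynomial.natDegree_mul hPK0 hPL0, hmul, Polynomial.natDegree_X_add_C]
  have hlc : (Psi K).leadingCoeff * (Psi L).leadingCoeff = 1 := by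
    rw [← Polynomial.leadingCoeff_mul, hmul, Polynomial.leadingCoeff_X_add_C]
  rcases Nat.eq_zero_or_pos (Psi K).natDegree with hdK | hdK
  · exfalso
    have hKC : Psi K = Polynomial.C ((Psi K).coeff 0) := Polynomial.eq_C_of_natDegree_eq_zero hdK
    have : IsUnit ((Psi K).leadingCoeff) := IsUnit.of_mul_eq_one _ hlc
    rw [Polynomial.leadingCoeff, hdK] at this
    obtain ⟨c, -, hc⟩ := Polynomial.isUnit_iff.mp this
    have : K = C c := by
      apply Psi.injective
      rw [Psi_C, hKC, hc]
    rw [this, totalDegree_C] at hK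
    exact hK rfl
  · have hdL : (Psi L).natDegree = 0 := by omega
    have hLC : Psi L = Polynomial.C ((Psi L).coeff 0) := Polynomial.eq_C_of_natDegree_eq_zero hdL
    have hulc : IsUnit ((Psi L).leadingCoeff) := IsUnit.of_mul_eq_one _ (by rw [mul_comm] at hlc; exact hlc)
    rw [Polynomial.leadingCoeff, hdL] at hulc
    obtain ⟨c, hcu, hc⟩ := Polynomial.isUnit_iff.mp hulc
    have hc0 : c ≠ 0 := hcu.ne_zero
    have hLc : L = C c := by
      apply Psi.injective
      rw [Psi_C, hLC, hc]
    refine ⟨c⁻¹, inv_ne_zero hc0, ?_⟩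
    have h2 : K * C c = C α * X 0 + X 1 + C γ := by rw [← hLc, h]
    calc K = K * C c * C c⁻¹ := by
              rw [mul_assoc, ← C_mul, mul_inv_cancel₀ hc0, C_1, mul_one]
      _ = C c⁻¹ * (C α * X 0 + X 1 + C γ) := by rw [h2, mul_comm]


lemma eval₂_C_comp (v : Fin 2 → ℂ) (K : MvPolynomial (Fin 2) ℂ) :
    eval₂ (C : ℂ →+* MvPolynomial (Fin 2) ℂ) (fun i => C (v i)) K = C (eval v K) := by
  have h := MvPolynomial.eval₂_comp_left (C : ℂ →+* MvPolynomial (Fin 2) ℂ) (RingHom.id ℂ) v K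
  rw [RingHom.comp_id] at h
  exact h.symm

lemma eval₂Hom_liftXY (g : Fin 4 → MvPolynomial (Fin 2) ℂ) (p : MvPolynomial (Fin 2) ℂ) :
    eval₂Hom (C : ℂ →+* MvPolynomial (Fin 2) ℂ) g (liftXY p) =
      eval₂ C (fun i : Fin 2 => g ⟨i.val, by omega⟩) p := by
  show eval₂ _ _ _ = _
  rw [liftXY, eval₂_rename]
  rfl

lemma eval₂Hom_liftST (g : Fin 4 → MvPolynomial (Fin 2) ℂ) (p : MvPolynomial (Fin 2) ℂ) :
    eval₂Hom (C : ℂ →+* MvPolynomial (Fin 2) ℂ) g (liftST p) =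
      eval₂ C (fun i : Fin 2 => g ⟨i.val + 2, by omega⟩) p := by
  show eval₂ _ _ _ = _
  rw [liftST, eval₂_rename]
  rfl

/-- The point-line incidence polynomial `F = x·s − y + t` is not Cartesian. -/
theorem incidence_polynomial_not_cartesian :
    ¬ IsCartesian (X 0 * X 2 - X 1 + X 3 : MvPolynomial (Fin 4) ℂ) := by
  rintro ⟨G, K, H, L, hG, hK, hF⟩
  obtain ⟨s₀, t₀, hst⟩ := lemA K hK
  have key1 : ∃ c : ℂ, c ≠ 0 ∧ G = C c * (C (-s₀) * X 0 + X 1 + C (-t₀)) := by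
    have h1 : eval₂Hom (C : ℂ →+* MvPolynomial (Fin 2) ℂ) ![X 0, X 1, C s₀, C t₀] (liftXY G)
        = G := by
      rw [eval₂Hom_liftXY]
      refine Eq.trans ?_ (eval₂_eta G)
      congr 1
      funext i
      fin_cases i <;> rfl
    have h2 : eval₂Hom (C : ℂ →+* MvPolynomial (Fin 2) ℂ) ![X 0, X 1, C s₀, C t₀] (liftST K)
        = 0 := by
      rw [eval₂Hom_liftST]
      have hmid : eval₂ (C : ℂ →+* MvPolynomial (Fin 2) ℂ) (fun i => C (![s₀, t₀] i)) K = 0 := by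
        rw [eval₂_C_comp, hst, C_0]
      refine Eq.trans ?_ hmid
      congr 1
      funext i
      fin_cases i <;> rfl
    have h3 := congrArg (eval₂Hom (C : ℂ →+* MvPolynomial (Fin 2) ℂ) ![X 0, X 1, C s₀, C t₀]) hF
    simp only [map_add, map_sub, map_mul, eval₂Hom_X', h1, h2, zero_mul, add_zero,
      Matrix.cons_val_zero, Matrix.cons_val_one, Matrix.head_cons, Matrix.cons_val_two,
      Matrix.cons_val_three, Matrix.tail_cons] at h3
    refine lemB G (-(eval₂Hom (C : ℂ →+* MvPolynomial (Fin 2) ℂ) ![X 0, X 1, C s₀, C t₀] H))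
      (-s₀) (-t₀) hG ?_
    rw [map_neg, map_neg]
    linear_combination h3
  obtain ⟨c, hc0, hGeq⟩ := key1
  have zero1 : eval ![0, t₀] G = 0 := by rw [hGeq]; simp
  have zero2 : eval ![1, s₀ + t₀] G = 0 := by rw [hGeq]; simp
  have key2 : ∀ a b : ℂ, eval ![a, b] G = 0 →
      ∃ d : ℂ, d ≠ 0 ∧ K = C d * (C a * X 0 + X 1 + C (-b)) := by
    intro a b hab
    have h1 : eval₂Hom (C : ℂ →+* MvPolynomial (Fin 2) ℂ) ![C a, C b, X 0, X 1] (liftXY G)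
        = 0 := by
      rw [eval₂Hom_liftXY]
      have hmid : eval₂ (C : ℂ →+* MvPolynomial (Fin 2) ℂ) (fun i => C (![a, b] i)) G = 0 := by
        rw [eval₂_C_comp, hab, C_0]
      refine Eq.trans ?_ hmid
      congr 1
      funext i
      fin_cases i <;> rfl
    have h2 : eval₂Hom (C : ℂ →+* MvPolynomial (Fin 2) ℂ) ![C a, C b, X 0, X 1] (liftST K)
        = K := by
      rw [eval₂Hom_liftST]
      refine Eq.trans ?_ (eval₂_eta K)
      congr 1
      funext i
      fin_cases i <;> rfl
    have h3 := congrArg (eval₂Hom (C : ℂ →+* MvPolynomial (Fin 2) ℂ) ![C a, C b, X 0, X 1]) hF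
    simp only [map_add, map_sub, map_mul, eval₂Hom_X', h1, h2, zero_mul, zero_add,
      Matrix.cons_val_zero, Matrix.cons_val_one, Matrix.head_cons, Matrix.cons_val_two,
      Matrix.cons_val_three, Matrix.tail_cons] at h3
    refine lemB K (eval₂Hom (C : ℂ →+* MvPolynomial (Fin 2) ℂ) ![C a, C b, X 0, X 1] L)
      a (-b) hK ?_
    rw [map_neg]
    linear_combination -h3
  obtain ⟨d₀, hd₀, hK0⟩ := key2 0 t₀ zero1
  obtain ⟨d₁, hd₁, hK1⟩ := key2 1 (s₀ + t₀) zero2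
  have e1 := congrArg (eval ![(0:ℂ), 0]) (hK0.symm.trans hK1)
  have e2 := congrArg (eval ![(1:ℂ), 0]) (hK0.symm.trans hK1)
  simp at e1 e2
  apply hd₁
  linear_combination e1 - e2
end
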